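/- Let μ and ν be Lagrangian subspaces of H. Then μ + ν = H if and only if the operator P_μ + P_ν : H → H is bijective (a continuous linear isomorphism). -/

import Mathlib

open scoped RealInnerProductSpace

/-- The annihilator of a set `μ` with respect to the symplectic form `ω(x, y) = ⟪J x, y⟫`. -/
def omegaAnn {H : Type*} [NormedAddCommGroup H] [InnerProductSpace ℝ H]
    (J : H →L[ℝ] H) (μ : Set H) : Set H :=
  {x : H | ∀ y ∈ μ, ⟪J x, y⟫ = 0}

/-- For Lagrangian subspaces `μ, ν`: `μ + ν = H` iff `P_μ + P_ν` is bijective. -/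
theorem lagrangian_transversal_iff_sum_proj_bijective
    {H : Type*} [NormedAddCommGroup H] [InnerProductSpace ℝ H] [CompleteSpace H]
    (J : H →L[ℝ] H) (hJ2 : ∀ x : H, J (J x) = -x)
    (hJorth : ∀ x y : H, ⟪J x, J y⟫ = ⟪x, y⟫)
    (μ ν : Submodule ℝ H)
    (hμ : omegaAnn J (μ : Set H) = (μ : Set H))
    (hν : omegaAnn J (ν : Set H) = (ν : Set H))
    (P Q : H →L[ℝ] H)
    (hPsa : ∀ x y : H, ⟪P x, y⟫ = ⟪x, P y⟫) (hPidem : P.comp P = P)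
    (hPrange : LinearMap.range (P : H →ₗ[ℝ] H) = μ)
    (hQsa : ∀ x y : H, ⟪Q x, y⟫ = ⟪x, Q y⟫) (hQidem : Q.comp Q = Q)
    (hQrange : LinearMap.range (Q : H →ₗ[ℝ] H) = ν) :
    μ ⊔ ν = ⊤ ↔ Function.Bijective ⇑(P + Q) := by
  -- basic consequences of idempotency and the ranges
  have hPP : ∀ x : H, P (P x) = P x := fun x => by
    conv_lhs => rw [← ContinuousLinearMap.comp_apply, hPidem]
  have hQQ : ∀ x : H, Q (Q x) = Q x := fun x => by
    conv_lhs => rw [← ContinuousLinearMap.comp_apply, hQidem]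
  have hPmem : ∀ x : H, P x ∈ μ := fun x => hPrange ▸ LinearMap.mem_range_self _ x
  have hQmem : ∀ x : H, Q x ∈ ν := fun x => hQrange ▸ LinearMap.mem_range_self _ x
  have hPfix : ∀ m ∈ μ, P m = m := by
    intro m hm
    rw [← hPrange] at hm
    obtain ⟨w, rfl⟩ := hm
    exact hPP w
  have hQfix : ∀ m ∈ ν, Q m = m := by
    intro m hm
    rw [← hQrange] at hm
    obtain ⟨w, rfl⟩ := hm
    exact hQQ w
  -- P kills vectors orthogonal to μ
  have hPzero : ∀ u : H, (∀ m ∈ μ, ⟪u, m⟫ = 0) → P u = 0 := by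
    intro u h
    have h0 : ⟪P u, P u⟫ = 0 := by
      calc ⟪P u, P u⟫ = ⟪u, P (P u)⟫ := hPsa u (P u)
        _ = ⟪u, P u⟫ := by rw [hPP]
        _ = 0 := h _ (hPmem u)
    exact inner_self_eq_zero.mp h0
  have hQzero : ∀ u : H, (∀ m ∈ ν, ⟪u, m⟫ = 0) → Q u = 0 := by
    intro u h
    have h0 : ⟪Q u, Q u⟫ = 0 := by
      calc ⟪Q u, Q u⟫ = ⟪u, Q (Q u)⟫ := hQsa u (Q u)
        _ = ⟪u, Q u⟫ := by rw [hQQ]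
        _ = 0 := h _ (hQmem u)
    exact inner_self_eq_zero.mp h0
  -- P x = 0 implies x ⊥ μ
  have hPorth : ∀ x : H, P x = 0 → ∀ m ∈ μ, ⟪x, m⟫ = 0 := by
    intro x hx m hm
    calc ⟪x, m⟫ = ⟪x, P m⟫ := by rw [hPfix m hm]
      _ = ⟪P x, m⟫ := (hPsa x m).symm
      _ = 0 := by rw [hx, inner_zero_left]
  have hQorth : ∀ x : H, Q x = 0 → ∀ m ∈ ν, ⟪x, m⟫ = 0 := by
    intro x hx m hm
    calc ⟪x, m⟫ = ⟪x, Q m⟫ := by rw [hQfix m hm]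
      _ = ⟪Q x, m⟫ := (hQsa x m).symm
      _ = 0 := by rw [hx, inner_zero_left]
  -- Lagrangian condition: J maps μ into μ-orthogonal, likewise for ν
  have hμω : ∀ m ∈ μ, ∀ y ∈ μ, ⟪J m, y⟫ = 0 := by
    intro m hm
    have hm' : m ∈ omegaAnn J (μ : Set H) := by rw [hμ]; exact hm
    exact hm'
  have hνω : ∀ m ∈ ν, ∀ y ∈ ν, ⟪J m, y⟫ = 0 := by
    intro m hm
    have hm' : m ∈ omegaAnn J (ν : Set H) := by rw [hν]; exact hm
    exact hm'
  constructor
  · intro htop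
    have hdec : ∀ z : H, ∃ a ∈ μ, ∃ b ∈ ν, a + b = z := by
      intro z
      have hz : z ∈ μ ⊔ ν := htop ▸ Submodule.mem_top
      exact Submodule.mem_sup.mp hz
    -- from z ∈ μ (resp. ν), produce an orthogonal decomposition of z
    -- with pieces orthogonal to μ and ν respectively
    have key : ∀ z : H, ∃ u v : H, (∀ m ∈ μ, ⟪u, m⟫ = 0) ∧ (∀ m ∈ ν, ⟪v, m⟫ = 0) ∧
        u + v = z := by
      intro z
      obtain ⟨a, ha, b, hb, hab⟩ := hdec (J z)
      refine ⟨-J a, -J b, ?_, ?_, ?_⟩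
      · intro m hm
        rw [← map_neg]
        exact hμω _ (neg_mem ha) m hm
      · intro m hm
        rw [← map_neg]
        exact hνω _ (neg_mem hb) m hm
      · have h := congrArg (fun w => J w) hab
        simp only [map_add, hJ2] at h
        -- h : J a + J b = -z
        have : -(J a + J b) = z := by rw [h, neg_neg]
        rw [← this, neg_add]
    constructor
    · -- injective
      intro x y hxy
      have hsub : (P + Q) (x - y) = 0 := by
        rw [map_sub, hxy, sub_self]
      set w := x - y with hw
      have hpq : P w + Q w = 0 := by
        rw [← ContinuousLinearMap.add_apply]; exact hsub
      have hinner : ⟪P w, P w⟫ + ⟪Q w, Q w⟫ = 0 := by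
        have h1 : ⟪P w, P w⟫ = ⟪P w + Q w, w⟫ - ⟪Q w, Q w⟫ := by
          have e1 : ⟪P w, P w⟫ = ⟪P w, w⟫ := by
            calc ⟪P w, P w⟫ = ⟪w, P (P w)⟫ := hPsa w (P w)
              _ = ⟪w, P w⟫ := by rw [hPP]
              _ = ⟪P w, w⟫ := real_inner_comm _ _
          have e2 : ⟪Q w, Q w⟫ = ⟪Q w, w⟫ := by
            calc ⟪Q w, Q w⟫ = ⟪w, Q (Q w)⟫ := hQsa w (Q w)
              _ = ⟪w, Q w⟫ := by rw [hQQ]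
              _ = ⟪Q w, w⟫ := real_inner_comm _ _
          rw [e1, e2, inner_add_left]; ring
        rw [h1, hpq, inner_zero_left]; ring
      have hP0 : P w = 0 := by
        have h1 : (0:ℝ) ≤ ⟪P w, P w⟫ := real_inner_self_nonneg
        have h2 : (0:ℝ) ≤ ⟪Q w, Q w⟫ := real_inner_self_nonneg
        have : ⟪P w, P w⟫ = 0 := by linarith
        exact inner_self_eq_zero.mp this
      have hQ0 : Q w = 0 := by
        have h1 : (0:ℝ) ≤ ⟪P w, P w⟫ := real_inner_self_nonneg
        have h2 : (0:ℝ) ≤ ⟪Q w, Q w⟫ := real_inner_self_nonneg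
        have : ⟪Q w, Q w⟫ = 0 := by linarith
        exact inner_self_eq_zero.mp this
      have hw0 : w = 0 := by
        obtain ⟨a, ha, b, hb, hab⟩ := hdec w
        have h4 : ⟪w, a + b⟫ = 0 := by
          rw [inner_add_right, hPorth w hP0 a ha, hQorth w hQ0 b hb, add_zero]
        rw [hab] at h4
        exact inner_self_eq_zero.mp h4
      have := sub_eq_zero.mp hw0
      exact this
    · -- surjective
      intro z
      obtain ⟨m, hm, n, hn, hmn⟩ := hdec z
      -- decompose m = u + v with u ⊥ μ, v ⊥ ν; then P v = m, Q v = 0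
      obtain ⟨u₁, v₁, hu₁, hv₁, huv₁⟩ := key m
      obtain ⟨u₂, v₂, hu₂, hv₂, huv₂⟩ := key n
      refine ⟨v₁ + u₂, ?_⟩
      have hPu₁ : P u₁ = 0 := hPzero _ hu₁
      have hPu₂ : P u₂ = 0 := hPzero _ hu₂
      have hQv₁ : Q v₁ = 0 := hQzero _ hv₁
      have hQv₂ : Q v₂ = 0 := hQzero _ hv₂
      have hPv₁ : P v₁ = m := by
        have : P (u₁ + v₁) = m := by rw [huv₁]; exact hPfix m hm
        rw [map_add, hPu₁, zero_add] at this
        exact this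
      have hQu₂ : Q u₂ = n := by
        have : Q (u₂ + v₂) = n := by rw [huv₂]; exact hQfix n hn
        rw [map_add, hQv₂, add_zero] at this
        exact this
      show (P + Q) (v₁ + u₂) = z
      rw [ContinuousLinearMap.add_apply, map_add, map_add, hPv₁, hPu₂, hQv₁, hQu₂]
      rw [add_zero, zero_add, hmn]
  · intro hbij
    rw [eq_top_iff]
    intro z _
    obtain ⟨x, hx⟩ := hbij.2 z
    have : (P + Q) x = z := hx
    rw [← this, ContinuousLinearMap.add_apply]
    exact Submodule.add_mem_sup (hPmem x) (hQmem x)
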